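/- Let α < 0 and β > 0, let ρ(s) = s^{α−2} e^{−β/s} for s ∈ (0,∞), and for l ∈ ℕ define Ψ_l(s) = (1/ρ(s)) · (d/ds)^l [s^{2l} ρ(s)]. Then for every natural number l with l < (1−α)/2, the function s ↦ Ψ_l(s)² ρ(s) is integrable on (0,∞); that is, Ψ_l(s)√ρ(s) is square integrable on (0,∞). -/

import Mathlib

open MeasureTheory

lemma sq12_pow_le_exp (k : ℕ) {x : ℝ} (hx : 0 ≤ x) :
    x ^ k ≤ (k : ℝ) ^ k * Real.exp x := by
  rcases Nat.eq_zero_or_pos k with hk | hk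
  · subst hk; simpa using Real.one_le_exp hx
  · have hk' : (0:ℝ) < k := by exact_mod_cast hk
    have h1 : x / k ≤ Real.exp (x / k) := by
      have := Real.add_one_le_exp (x / k); linarith
    have h2 : (x / k) ^ k ≤ (Real.exp (x / k)) ^ k :=
      pow_le_pow_left₀ (by positivity) h1 k
    have h3 : (Real.exp (x / k)) ^ k = Real.exp x := by
      rw [← Real.exp_nat_mul]; congr 1; field_simp
    calc x ^ k = ((k : ℝ) * (x / k)) ^ k := by rw [mul_div_cancel₀ _ hk'.ne']
      _ = (k:ℝ)^k * (x/k)^k := mul_pow _ _ _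
      _ ≤ (k:ℝ)^k * Real.exp x := by rw [← h3]; exact mul_le_mul_of_nonneg_left h2 (by positivity)

lemma sq12_iter_deriv (β m : ℝ) (n : ℕ) :
    ∃ c : ℕ → ℝ, ∀ s : ℝ, 0 < s →
      iteratedDeriv n (fun t : ℝ => t ^ m * Real.exp (-β / t)) s
        = (∑ j ∈ Finset.range (n + 1), c j * s ^ (m - n - j)) * Real.exp (-β / s) := by
  induction n with
  | zero =>
      refine ⟨fun _ => 1, fun s hs => ?_⟩
      simp [iteratedDeriv_zero]
  | succ n ih =>
      obtain ⟨c, hc⟩ := ih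
      refine ⟨fun j => (if j ≤ n then c j * (m - n - j) else 0)
        + (if j = 0 then 0 else β * c (j - 1)), fun s hs => ?_⟩
      rw [iteratedDeriv_succ]
      have hev : iteratedDeriv n (fun t : ℝ => t ^ m * Real.exp (-β / t))
          =ᶠ[nhds s] fun s => (∑ j ∈ Finset.range (n + 1), c j * s ^ (m - n - j)) * Real.exp (-β / s) := by
        filter_upwards [isOpen_Ioi.mem_nhds hs] with t ht
        exact hc t ht
      rw [hev.deriv_eq]
      -- derivative of the explicit function
      have hsne : s ≠ 0 := hs.ne'
      have H1 : HasDerivAt (fun s : ℝ => ∑ j ∈ Finset.range (n + 1), c j * s ^ (m - n - j))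
          (∑ j ∈ Finset.range (n + 1), c j * ((m - n - j) * s ^ (m - n - j - 1))) s := by
        apply HasDerivAt.fun_sum
        intro j _
        exact (Real.hasDerivAt_rpow_const (Or.inl hsne)).const_mul (c j)
      have H2 : HasDerivAt (fun s : ℝ => Real.exp (-β / s))
          (Real.exp (-β / s) * (β / s ^ 2)) s := by
        have h0 : HasDerivAt (fun s : ℝ => -β / s) (β / s ^ 2) s := by
          simpa [div_eq_mul_inv, neg_mul, mul_comm] using ((hasDerivAt_inv hsne).const_mul (-β))
        simpa using h0.exp
      have H := (H1.fun_mul H2).deriv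
      rw [H]
      have key : (∑ j ∈ Finset.range (n + 1), c j * ((m - n - j) * s ^ (m - n - j - 1)))
          + (∑ j ∈ Finset.range (n + 1), c j * s ^ (m - n - j)) * (β / s ^ 2)
          = ∑ j ∈ Finset.range (n + 1 + 1),
            ((if j ≤ n then c j * (m - n - j) else 0) + (if j = 0 then 0 else β * c (j - 1)))
              * s ^ (m - (n + 1 : ℕ) - j) := by
        simp only [add_mul, Finset.sum_add_distrib]
        congr 1
        · conv_rhs => rw [Finset.sum_range_succ]
          rw [if_neg (Nat.not_succ_le_self n), zero_mul, add_zero]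
          apply Finset.sum_congr rfl
          intro j hj
          rw [if_pos (Nat.lt_succ_iff.mp (Finset.mem_range.mp hj))]
          have : m - (n + 1 : ℕ) - j = m - n - j - 1 := by push_cast; ring
          rw [this]; ring
        · conv_rhs => rw [Finset.sum_range_succ']
          simp only [Nat.add_sub_cancel, if_neg (Nat.succ_ne_zero _), ite_true, if_pos,
            zero_mul, add_zero]
          rw [Finset.sum_mul]
          apply Finset.sum_congr rfl
          intro j _
          have h2 : s ^ (m - (n + 1 : ℕ) - (j + 1 : ℕ)) = s ^ (m - n - j) / s ^ (2:ℝ) := by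
            rw [← Real.rpow_sub hs]; congr 1; push_cast; ring
          rw [h2]
          rw [Real.rpow_two]
          field_simp
      have : (∑ j ∈ Finset.range (n + 1), c j * ((m - n - j) * s ^ (m - n - j - 1)))
            * Real.exp (-β / s)
          + (∑ j ∈ Finset.range (n + 1), c j * s ^ (m - n - j))
            * (Real.exp (-β / s) * (β / s ^ 2))
          = ((∑ j ∈ Finset.range (n + 1), c j * ((m - n - j) * s ^ (m - n - j - 1)))
          + (∑ j ∈ Finset.range (n + 1), c j * s ^ (m - n - j)) * (β / s ^ 2))
            * Real.exp (-β / s) := by ring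
      rw [this, key]

private lemma sq12_main
    (α β : ℝ) (hα : α < 0) (hβ : 0 < β)
    (ρ : ℝ → ℝ)
    (hρ : ∀ s : ℝ, s ∈ Set.Ioi (0 : ℝ) → ρ s = s ^ (α - 2) * Real.exp (-β / s))
    (l : ℕ) (hl : (l : ℝ) < (1 - α) / 2)
    (Ψ : ℝ → ℝ)
    (hΨ : ∀ s : ℝ, s ∈ Set.Ioi (0 : ℝ) →
      Ψ s = (1 / ρ s) * iteratedDeriv l (fun t => t ^ (2 * l) * ρ t) s)
    (c : ℕ → ℝ)
    (hc : ∀ s : ℝ, 0 < s →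
      iteratedDeriv l (fun t : ℝ => t ^ (2*(l:ℝ)+α-2) * Real.exp (-β / t)) s
        = (∑ j ∈ Finset.range (l + 1), c j * s ^ (2*(l:ℝ)+α-2 - l - j)) * Real.exp (-β / s)) :
    IntegrableOn (fun s => Ψ s ^ 2 * ρ s) (Set.Ioi (0 : ℝ)) := by
  set P : ℝ → ℝ := fun s => ∑ j ∈ Finset.range (l + 1), c j * s ^ ((l : ℝ) - j) with hPdef
  set C : ℝ := ∑ j ∈ Finset.range (l + 1), |c j| with hCdef
  set F : ℝ → ℝ := fun s => P s ^ 2 * (s ^ (α - 2) * Real.exp (-β / s)) with hFdef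
  have hC0 : 0 ≤ C := Finset.sum_nonneg fun j _ => abs_nonneg _
  have hFm : Measurable F := by fun_prop
  -- Ψ = P on (0,∞)
  have hΨP : ∀ s : ℝ, 0 < s → Ψ s = P s := by
    intro s hs
    have hgg : (fun t : ℝ => t ^ (2 * l) * ρ t)
        =ᶠ[nhds s] (fun t : ℝ => t ^ (2*(l:ℝ)+α-2) * Real.exp (-β / t)) := by
      filter_upwards [isOpen_Ioi.mem_nhds hs] with t ht
      rw [hρ t ht, ← mul_assoc, ← Real.rpow_natCast t (2 * l), ← Real.rpow_add ht]
      congr 2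
      push_cast; ring
    rw [hΨ s hs, Filter.EventuallyEq.iteratedDeriv_eq l hgg, hc s hs, hρ s hs]
    have ha : s ^ (α - 2) ≠ 0 := (Real.rpow_pos_of_pos hs _).ne'
    have he : Real.exp (-β / s) ≠ 0 := Real.exp_ne_zero _
    have hX : (∑ j ∈ Finset.range (l + 1), c j * s ^ (2*(l:ℝ)+α-2 - l - j))
        = P s * s ^ (α - 2) := by
      rw [hPdef, Finset.sum_mul]
      refine Finset.sum_congr rfl fun j _ => ?_
      rw [mul_assoc, ← Real.rpow_add hs]
      congr 2
      ring
    rw [hX]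
    field_simp
  -- bounds on P
  have hP1 : ∀ s : ℝ, 0 < s → s ≤ 1 → |P s| ≤ C := by
    intro s hs hs1
    refine (Finset.abs_sum_le_sum_abs _ _).trans (Finset.sum_le_sum fun j hj => ?_)
    rw [abs_mul, abs_of_nonneg (Real.rpow_nonneg hs.le _)]
    have h1 : s ^ ((l:ℝ) - j) ≤ 1 := by
      apply Real.rpow_le_one hs.le hs1
      have : (j:ℝ) ≤ l := by exact_mod_cast Nat.lt_succ_iff.mp (Finset.mem_range.mp hj)
      linarith
    calc |c j| * s ^ ((l:ℝ) - j) ≤ |c j| * 1 := mul_le_mul_of_nonneg_left h1 (abs_nonneg _)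
      _ = |c j| := mul_one _
  have hP2 : ∀ s : ℝ, 1 ≤ s → |P s| ≤ C * s ^ (l : ℝ) := by
    intro s hs1
    have hs : (0:ℝ) < s := lt_of_lt_of_le one_pos hs1
    rw [hCdef, Finset.sum_mul]
    refine (Finset.abs_sum_le_sum_abs _ _).trans (Finset.sum_le_sum fun j hj => ?_)
    rw [abs_mul, abs_of_nonneg (Real.rpow_nonneg hs.le _)]
    refine mul_le_mul_of_nonneg_left ?_ (abs_nonneg _)
    apply Real.rpow_le_rpow_of_exponent_le hs1
    have : (0:ℝ) ≤ j := Nat.cast_nonneg _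
    linarith
  -- integrable on (0,1]
  set k : ℕ := ⌈2 - α⌉₊ with hkdef
  have hIoc : IntegrableOn F (Set.Ioc 0 1) := by
    apply Measure.integrableOn_of_bounded (M := C ^ 2 * ((k:ℝ) ^ k / β ^ k))
      measure_Ioc_lt_top.ne hFm.aestronglyMeasurable
    rw [ae_restrict_iff' measurableSet_Ioc]
    refine ae_of_all _ fun s hs => ?_
    obtain ⟨hs0, hs1⟩ := hs
    have hβk : (0:ℝ) < β ^ k := by positivity
    have hu : 1 ≤ s⁻¹ := (one_le_inv₀ hs0).mpr hs1
    have e1 : s ^ (α - 2) = s⁻¹ ^ ((2:ℝ) - α) := by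
      rw [Real.inv_rpow hs0.le, ← Real.rpow_neg hs0.le]
      congr 1; ring
    have e2 : s⁻¹ ^ ((2:ℝ) - α) ≤ s⁻¹ ^ (k:ℝ) :=
      Real.rpow_le_rpow_of_exponent_le hu (Nat.le_ceil _)
    have e3 : s⁻¹ ^ (k:ℝ) = s⁻¹ ^ k := Real.rpow_natCast _ _
    have e4 : s⁻¹ ^ k ≤ (k:ℝ) ^ k / β ^ k * Real.exp (β / s) := by
      have h0 := sq12_pow_le_exp k (x := β / s) (by positivity)
      rw [div_pow] at h0
      rw [div_mul_eq_mul_div, le_div_iff₀ hβk]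
      have hrw : s⁻¹ ^ k * β ^ k = β ^ k / s ^ k := by
        rw [inv_pow]; field_simp
      rw [hrw]
      exact h0
    have e5 : s ^ (α - 2) * Real.exp (-β / s) ≤ (k:ℝ) ^ k / β ^ k := by
      have h6 : s ^ (α - 2) ≤ (k:ℝ) ^ k / β ^ k * Real.exp (β / s) := by
        rw [e1]; exact e2.trans (e3.le.trans e4)
      have h7 : Real.exp (β / s) * Real.exp (-β / s) = 1 := by
        rw [← Real.exp_add]
        rw [show β / s + -β / s = 0 by ring, Real.exp_zero]
      calc s ^ (α - 2) * Real.exp (-β / s)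
          ≤ ((k:ℝ) ^ k / β ^ k * Real.exp (β / s)) * Real.exp (-β / s) :=
            mul_le_mul_of_nonneg_right h6 (Real.exp_nonneg _)
        _ = (k:ℝ) ^ k / β ^ k := by rw [mul_assoc, h7, mul_one]
    have hPsq : P s ^ 2 ≤ C ^ 2 := by
      have := pow_le_pow_left₀ (abs_nonneg _) (hP1 s hs0 hs1) 2
      rwa [sq_abs] at this
    have hF0 : 0 ≤ F s := by
      have := Real.rpow_nonneg hs0.le (α - 2)
      have := (Real.exp_pos (-β / s)).le
      positivity
    rw [Real.norm_eq_abs, abs_of_nonneg hF0]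
    calc F s ≤ C ^ 2 * ((k:ℝ) ^ k / β ^ k) :=
          mul_le_mul hPsq e5 (by positivity) (by positivity)
      _ = C ^ 2 * ((k:ℝ) ^ k / β ^ k) := rfl
  -- integrable on (1,∞)
  have hexp_lt : 2*(l:ℝ)+α-2 < -1 := by linarith
  have hIoi : IntegrableOn F (Set.Ioi 1) := by
    have hg : IntegrableOn (fun s : ℝ => C ^ 2 * s ^ (2*(l:ℝ)+α-2)) (Set.Ioi 1) :=
      (integrableOn_Ioi_rpow_of_lt hexp_lt one_pos).const_mul _
    refine hg.mono' hFm.aestronglyMeasurable ?_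
    rw [ae_restrict_iff' measurableSet_Ioi]
    refine ae_of_all _ fun s hs => ?_
    have hs1 : (1:ℝ) < s := hs
    have hs0 : (0:ℝ) < s := lt_trans one_pos hs1
    have h1 : P s ^ 2 ≤ C ^ 2 * s ^ (2*(l:ℝ)) := by
      have h := pow_le_pow_left₀ (abs_nonneg _) (hP2 s hs1.le) 2
      rw [sq_abs] at h
      calc P s ^ 2 ≤ (C * s ^ (l:ℝ)) ^ 2 := h
        _ = C ^ 2 * s ^ (2*(l:ℝ)) := by
            rw [mul_pow, ← Real.rpow_natCast (s ^ (l:ℝ)) 2, ← Real.rpow_mul hs0.le]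
            congr 2
            push_cast; ring
    have h2 : s ^ (α - 2) * Real.exp (-β / s) ≤ s ^ (α - 2) := by
      apply mul_le_of_le_one_right (Real.rpow_nonneg hs0.le _)
      rw [Real.exp_le_one_iff, neg_div]
      have : (0:ℝ) ≤ β / s := by positivity
      linarith
    have hF0 : 0 ≤ F s := by
      have := Real.rpow_nonneg hs0.le (α - 2)
      have := (Real.exp_pos (-β / s)).le
      positivity
    rw [Real.norm_eq_abs, abs_of_nonneg hF0]
    calc F s ≤ (C ^ 2 * s ^ (2*(l:ℝ))) * s ^ (α - 2) :=
          mul_le_mul h1 h2 (by positivity) (by positivity)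
      _ = C ^ 2 * s ^ (2*(l:ℝ)+α-2) := by
          rw [mul_assoc, ← Real.rpow_add hs0]
          congr 2
          ring
  have hunion : IntegrableOn F (Set.Ioi (0:ℝ)) := by
    have := hIoc.union hIoi
    rwa [Set.Ioc_union_Ioi_eq_Ioi zero_le_one] at this
  refine hunion.congr_fun (fun s hs => ?_) measurableSet_Ioi
  have hs0 : (0:ℝ) < s := hs
  rw [hρ s hs, hΨP s hs0]

/-- For `α < 0`, `β > 0`, the weight `ρ(s) = s^{α-2} e^{-β/s}`
on `(0,∞)` (case `σ(s) = s²`) and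
`Ψ_l(s) = (1/ρ(s)) (d/ds)^l [s^{2l} ρ(s)]`, for every `l < (1-α)/2` the
function `s ↦ Ψ_l(s)² ρ(s)` is integrable on `(0,∞)`; that is,
`Ψ_l √ρ` is square integrable on `(0,∞)`. -/
theorem square_integrability_sigma_s_sq
    (α β : ℝ) (hα : α < 0) (hβ : 0 < β)
    (ρ : ℝ → ℝ)
    (hρ : ∀ s : ℝ, s ∈ Set.Ioi (0 : ℝ) → ρ s = s ^ (α - 2) * Real.exp (-β / s))
    (l : ℕ) (hl : (l : ℝ) < (1 - α) / 2)
    (Ψ : ℝ → ℝ)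
    (hΨ : ∀ s : ℝ, s ∈ Set.Ioi (0 : ℝ) →
      Ψ s = (1 / ρ s) * iteratedDeriv l (fun t => t ^ (2 * l) * ρ t) s) :
    IntegrableOn (fun s => Ψ s ^ 2 * ρ s) (Set.Ioi (0 : ℝ)) := by
  obtain ⟨c, hc⟩ := sq12_iter_deriv β (2*(l:ℝ)+α-2) l
  exact sq12_main α β hα hβ ρ hρ l hl Ψ hΨ c hc
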